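/- Let H_1 and H_2 be disjoint graphs, let P be a path with at least one vertex, and let v_1 ∈ V(H_1) and v_2 ∈ V(H_2). Let G be the graph formed by taking the disjoint union of H_1, H_2 and P and identifying the first vertex of P with v_1 and the last vertex of P with v_2. Suppose f_1 : V(H_1) → [5]² and f_2 : V(H_2) → [5]² are functions such that, for i = 1, 2, every vertex of H_i except possibly v_i is satisfied with respect to f_i (in H_i). If |⋃_{u ∈ N(v_1)} f_1(u)| ≥ 4 and |⋃_{u ∈ N(v_2)} f_2(u)| ≥ 3 (neighborhoods taken in H_1 and H_2 respectively), then G is configurable. -/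

import Mathlib

open SimpleGraph
open Fin.NatCast Fin.CommRing

lemma fin5_perm_lists (l l' : List (Fin 5)) (h : l.Nodup) (h' : l'.Nodup)
    (hlen : l.length = l'.length) :
    ∃ σ : Equiv.Perm (Fin 5), ∀ (i : ℕ) (hi : i < l.length) (hi' : i < l'.length),
      σ (l.get ⟨i, hi⟩) = l'.get ⟨i, hi'⟩ := by
  classical
  let e : {x // x ∈ l} ≃ {x // x ∈ l'} :=
    (h.getEquiv l).symm.trans ((finCongr hlen).trans (h'.getEquiv l'))
  refine ⟨Equiv.extendSubtype e, ?_⟩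
  intro i hi hi'
  have hmem : l.get ⟨i, hi⟩ ∈ l := List.get_mem _ _
  rw [Equiv.extendSubtype_apply_of_mem e _ hmem]
  show ((e ⟨l.get ⟨i, hi⟩, hmem⟩ : {x // x ∈ l'}) : Fin 5) = _
  have h1 : (h.getEquiv l).symm ⟨l.get ⟨i, hi⟩, hmem⟩ = ⟨i, hi⟩ := by
    rw [Equiv.symm_apply_eq]
    simp [List.Nodup.getEquiv]
  simp only [e, Equiv.trans_apply, h1]
  simp [List.Nodup.getEquiv, finCongr]

lemma fin5_perm3 (a b c a' b' c' : Fin 5) (h : ([a,b,c] : List (Fin 5)).Nodup)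
    (h' : ([a',b',c'] : List (Fin 5)).Nodup) :
    ∃ σ : Equiv.Perm (Fin 5), σ a = a' ∧ σ b = b' ∧ σ c = c' := by
  obtain ⟨σ, hσ⟩ := fin5_perm_lists [a,b,c] [a',b',c'] h h' rfl
  exact ⟨σ, hσ 0 (by norm_num) (by norm_num), hσ 1 (by norm_num) (by norm_num),
    hσ 2 (by norm_num) (by norm_num)⟩

lemma fin5_perm5 (a b c d e a' b' c' d' e' : Fin 5)
    (h : ([a,b,c,d,e] : List (Fin 5)).Nodup)
    (h' : ([a',b',c',d',e'] : List (Fin 5)).Nodup) :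
    ∃ σ : Equiv.Perm (Fin 5), σ a = a' ∧ σ b = b' ∧ σ c = c' ∧ σ d = d' ∧ σ e = e' := by
  obtain ⟨σ, hσ⟩ := fin5_perm_lists [a,b,c,d,e] [a',b',c',d',e'] h h' rfl
  exact ⟨σ, hσ 0 (by norm_num) (by norm_num), hσ 1 (by norm_num) (by norm_num),
    hσ 2 (by norm_num) (by norm_num), hσ 3 (by norm_num) (by norm_num),
    hσ 4 (by norm_num) (by norm_num)⟩

lemma fin5_cast_two_mul_succ (n : ℕ) :
    ((2 * (n+1) : ℕ) : Fin 5) = ((2 * n : ℕ) : Fin 5) + 2 := by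
  push_cast; ring

lemma fin5_nodup5 (x : Fin 5) : ([x, x+1, x+2, x+3, x+4] : List (Fin 5)).Nodup := by
  fin_cases x <;> decide

lemma fin5_triple_cover (x c : Fin 5) :
    c = x ∨ c = x + 1 ∨ c = x + 2 ∨ c = (x+2) + 1 ∨ c = x + 4 ∨ c = (x+4) + 1 := by
  fin_cases x <;> fin_cases c <;> decide

lemma fin5_ne_succ (x : Fin 5) : x ≠ x + 1 := by fin_cases x <;> decide

lemma fin5_add23 (x : Fin 5) : (x + 2) + 3 = x ∧ (x + 2) + 4 = x + 1 := by
  fin_cases x <;> decide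


/-- `f` is a configuration on `G`. -/
def IsConfig {V : Type*} (G : SimpleGraph V) (f : V → Finset (Fin 5)) : Prop :=
  (∀ v, (f v).card = 2) ∧
  ∀ (v : V) (c : Fin 5), ∃ u, (u = v ∨ G.Adj u v) ∧ c ∈ f u

/-- A graph is configurable if it admits a configuration. -/
def Configurable {V : Type*} (G : SimpleGraph V) : Prop :=
  ∃ f : V → Finset (Fin 5), IsConfig G f

/-- Gluing lemma: `G` is obtained from the disjoint union of `H₁`, `H₂` and a path
`P` on `p ≥ 1` vertices by identifying the first vertex of `P` with `v₁ ∈ V(H₁)`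
and the last vertex of `P` with `v₂ ∈ V(H₂)`. The copies of `H₁`, `H₂`, `P` inside
`G` are described by injections `φ₁`, `φ₂`, `ψ` which overlap exactly as the
identifications require. If `fᵢ` satisfies every vertex of `Hᵢ` except possibly
`vᵢ`, the open neighborhood of `v₁` sees at least 4 colors, and the open
neighborhood of `v₂` sees at least 3 colors, then `G` is configurable. -/
theorem stmt14 {V1 V2 W : Type*} (H1 : SimpleGraph V1) (H2 : SimpleGraph V2)
    (G : SimpleGraph W) (v1 : V1) (v2 : V2) (p : ℕ) (hp : 1 ≤ p)
    (φ1 : V1 → W) (φ2 : V2 → W) (ψ : Fin p → W)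
    (hφ1 : Function.Injective φ1) (hφ2 : Function.Injective φ2)
    (hψ : Function.Injective ψ)
    (hcover : ∀ w : W, (∃ a, w = φ1 a) ∨ (∃ b, w = φ2 b) ∨ (∃ i, w = ψ i))
    (hend1 : ψ ⟨0, by omega⟩ = φ1 v1)
    (hend2 : ψ ⟨p - 1, by omega⟩ = φ2 v2)
    (hsep12 : ∀ a b, φ1 a = φ2 b → a = v1 ∧ b = v2 ∧ p = 1)
    (hsep1 : ∀ a i, φ1 a = ψ i → a = v1 ∧ (i : ℕ) = 0)
    (hsep2 : ∀ b i, φ2 b = ψ i → b = v2 ∧ (i : ℕ) = p - 1)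
    (hadj : ∀ w w', G.Adj w w' ↔
      (∃ a b, H1.Adj a b ∧ w = φ1 a ∧ w' = φ1 b) ∨
      (∃ a b, H2.Adj a b ∧ w = φ2 a ∧ w' = φ2 b) ∨
      (∃ i : ℕ, ∃ h : i + 1 < p,
        (w = ψ ⟨i, Nat.lt_of_succ_lt h⟩ ∧ w' = ψ ⟨i + 1, h⟩) ∨
        (w' = ψ ⟨i, Nat.lt_of_succ_lt h⟩ ∧ w = ψ ⟨i + 1, h⟩)))
    (f1 : V1 → Finset (Fin 5)) (f2 : V2 → Finset (Fin 5))
    (hf1card : ∀ a, (f1 a).card = 2) (hf2card : ∀ b, (f2 b).card = 2)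
    (hf1sat : ∀ a, a ≠ v1 → ∀ c : Fin 5, ∃ u, (u = a ∨ H1.Adj u a) ∧ c ∈ f1 u)
    (hf2sat : ∀ b, b ≠ v2 → ∀ c : Fin 5, ∃ u, (u = b ∨ H2.Adj u b) ∧ c ∈ f2 u)
    (hbig1 : 4 ≤ (⋃ u ∈ H1.neighborSet v1, (↑(f1 u) : Set (Fin 5))).ncard)
    (hbig2 : 3 ≤ (⋃ u ∈ H2.neighborSet v2, (↑(f2 u) : Set (Fin 5))).ncard) :
    Configurable G := by
    classical
  set A : Set (Fin 5) := ⋃ u ∈ H1.neighborSet v1, (↑(f1 u) : Set (Fin 5)) with hAdef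
  set B : Set (Fin 5) := ⋃ u ∈ H2.neighborSet v2, (↑(f2 u) : Set (Fin 5)) with hBdef
  have hmemA : ∀ c : Fin 5, c ∈ A ↔ ∃ u, H1.Adj v1 u ∧ c ∈ f1 u := by
    intro c
    simp [hAdef, Set.mem_iUnion, SimpleGraph.mem_neighborSet]
  have hmemB : ∀ c : Fin 5, c ∈ B ↔ ∃ u, H2.Adj v2 u ∧ c ∈ f2 u := by
    intro c
    simp [hBdef, Set.mem_iUnion, SimpleGraph.mem_neighborSet]
  -- elements of S = f1 v1 and T = f2 v2
  obtain ⟨s₁, s₂, hs, hSeq⟩ := Finset.card_eq_two.mp (hf1card v1)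
  obtain ⟨t₁, t₂, ht, hTeq⟩ := Finset.card_eq_two.mp (hf2card v2)
  -- the at-most-one color outside A
  have hAone : ∀ c₁ c₂ : Fin 5, c₁ ∉ A → c₂ ∉ A → c₁ = c₂ := by
    intro c₁ c₂ h1 h2
    have h5 : A.ncard + Aᶜ.ncard = 5 := by
      have := Set.ncard_add_ncard_compl A
      simpa [Nat.card_eq_fintype_card] using this
    have hle : Aᶜ.ncard ≤ 1 := by omega
    exact (Set.ncard_le_one (Set.toFinite _)).mp hle c₁ h1 c₂ h2
  obtain ⟨x₁, hx₁S, hx₁⟩ : ∃ x, x ∉ f1 v1 ∧ ∀ c, c ∉ A → c ∉ f1 v1 → c = x := by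
    by_cases hne : ∃ c, c ∉ A ∧ c ∉ f1 v1
    · obtain ⟨x, hxA, hxS⟩ := hne
      exact ⟨x, hxS, fun c hcA _ => hAone c x hcA hxA⟩
    · push_neg at hne
      have hex : ∃ x, x ∉ f1 v1 := by
        by_contra h
        push_neg at h
        have hsub : (Finset.univ : Finset (Fin 5)) ⊆ f1 v1 := fun x _ => h x
        have := Finset.card_le_card hsub
        simp [hf1card v1] at this
      obtain ⟨x, hx⟩ := hex
      exact ⟨x, hx, fun c hcA hcS => absurd (hne c hcA) hcS⟩
  -- a color of B outside T
  obtain ⟨b₀, hb₀B, hb₀T⟩ : ∃ b₀, b₀ ∈ B ∧ b₀ ∉ f2 v2 := by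
    by_contra h
    push_neg at h
    have hsub : B ⊆ (↑(f2 v2) : Set (Fin 5)) := fun c hc => h c hc
    have := Set.ncard_le_ncard hsub (Set.toFinite _)
    rw [Set.ncard_coe_finset, hf2card v2] at this
    omega
  -- the two remaining colors
  have hb₀t₁ : b₀ ≠ t₁ := fun h => hb₀T (by rw [hTeq, h]; simp)
  have hb₀t₂ : b₀ ≠ t₂ := fun h => hb₀T (by rw [hTeq, h]; simp)
  have hcard3 : ({t₁, t₂, b₀} : Finset (Fin 5)).card = 3 := by
    rw [Finset.card_insert_of_notMem (by simp [ht, hb₀t₁.symm]),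
      Finset.card_insert_of_notMem (by simp [hb₀t₂.symm]), Finset.card_singleton]
  have hcardc : (({t₁, t₂, b₀} : Finset (Fin 5))ᶜ).card = 2 := by
    rw [Finset.card_compl, hcard3]
    rfl
  obtain ⟨y, z, hyz, hYZ⟩ := Finset.card_eq_two.mp hcardc
  have hymem : y ∉ ({t₁, t₂, b₀} : Finset (Fin 5)) := by
    have : y ∈ (({t₁, t₂, b₀} : Finset (Fin 5))ᶜ) := by rw [hYZ]; simp
    simpa using this
  have hzmem : z ∉ ({t₁, t₂, b₀} : Finset (Fin 5)) := by
    have : z ∈ (({t₁, t₂, b₀} : Finset (Fin 5))ᶜ) := by rw [hYZ]; simp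
    simpa using this
  have hmem_yz : ∀ c : Fin 5, c ∉ B → c ∉ f2 v2 → (c = y ∨ c = z) := by
    intro c hcB hcT
    have h1 : c ≠ t₁ := fun h => hcT (by rw [hTeq, h]; simp)
    have h2 : c ≠ t₂ := fun h => hcT (by rw [hTeq, h]; simp)
    have h3 : c ≠ b₀ := fun h => hcB (h ▸ hb₀B)
    have : c ∈ (({t₁, t₂, b₀} : Finset (Fin 5))ᶜ) := by simp [h1, h2, h3]
    rw [hYZ] at this
    simpa using this
  -- base color of the pattern at position p-1
  set E : Fin 5 := ((2 * (p-1) : ℕ) : Fin 5) with hEdef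
  -- permutations
  have hx₁s₁ : s₁ ≠ x₁ := fun h => hx₁S (by rw [hSeq, ← h]; simp)
  have hx₁s₂ : s₂ ≠ x₁ := fun h => hx₁S (by rw [hSeq, ← h]; simp)
  obtain ⟨σ1, hσ1s₁, hσ1s₂, hσ1x₁⟩ :=
    fin5_perm3 s₁ s₂ x₁ 0 1 2 (by simp [hs, hx₁s₁, hx₁s₂]) (by decide)
  have hynd : ([t₁, t₂, b₀, y, z] : List (Fin 5)).Nodup := by
    simp at hymem hzmem
    simp [ht, hb₀t₁.symm, hb₀t₂.symm, hyz,
      Ne.symm hymem.1, Ne.symm hymem.2.1, Ne.symm hymem.2.2,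
      Ne.symm hzmem.1, Ne.symm hzmem.2.1, Ne.symm hzmem.2.2]
  obtain ⟨σ2, hσ2t₁, hσ2t₂, hσ2b₀, hσ2y, hσ2z⟩ :=
    fin5_perm5 t₁ t₂ b₀ y z E (E+1) (E+2) (E+3) (E+4) hynd (fin5_nodup5 E)
  -- the pattern
  set pat : ℕ → Finset (Fin 5) :=
    fun n => {((2 * n : ℕ) : Fin 5), ((2 * n : ℕ) : Fin 5) + 1} with hpatdef
  -- the configuration
  set f : W → Finset (Fin 5) := fun w =>
    if h : ∃ a, w = φ1 a then (f1 h.choose).image σ1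
    else if h2 : ∃ b, w = φ2 b then (f2 h2.choose).image σ2
    else if h3 : ∃ i : Fin p, w = ψ i then pat ((h3.choose : Fin p) : ℕ)
    else ∅ with hfdef
  -- images of the endpoint pairs
  have himg1 : (f1 v1).image σ1 = pat 0 := by
    rw [hSeq]
    simp only [Finset.image_insert, Finset.image_singleton, hσ1s₁, hσ1s₂, hpatdef]
    norm_num
  have himg2 : (f2 v2).image σ2 = pat (p-1) := by
    rw [hTeq]
    simp only [Finset.image_insert, Finset.image_singleton, hσ2t₁, hσ2t₂, hpatdef]
    rfl
  -- evaluation lemmas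
  have hfφ1 : ∀ a, f (φ1 a) = (f1 a).image σ1 := by
    intro a
    have hex : ∃ a', φ1 a = φ1 a' := ⟨a, rfl⟩
    have : hex.choose = a := (hφ1 hex.choose_spec).symm
    simp only [hfdef, dif_pos hex, this]
  have hfφ2 : ∀ b, f (φ2 b) = (f2 b).image σ2 := by
    intro b
    by_cases h : ∃ a, φ2 b = φ1 a
    · obtain ⟨hchv, hbv, hp1⟩ := hsep12 h.choose b h.choose_spec.symm
      have h1 : f (φ2 b) = (f1 v1).image σ1 := by
        simp only [hfdef, dif_pos h, hchv]
      rw [h1, himg1, hbv, himg2, hp1]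
    · have hex : ∃ b', φ2 b = φ2 b' := ⟨b, rfl⟩
      have : hex.choose = b := (hφ2 hex.choose_spec).symm
      simp only [hfdef, dif_neg h, dif_pos hex, this]
  have hfψ : ∀ i : Fin p, f (ψ i) = pat (i : ℕ) := by
    intro i
    by_cases h : ∃ a, ψ i = φ1 a
    · obtain ⟨hav, hi0⟩ := hsep1 h.choose i h.choose_spec.symm
      have h1 : f (ψ i) = (f1 v1).image σ1 := by
        simp only [hfdef, dif_pos h, hav]
      rw [h1, himg1, hi0]
    · by_cases h2 : ∃ b, ψ i = φ2 b
      · obtain ⟨hbv, hip⟩ := hsep2 h2.choose i h2.choose_spec.symm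
        have h1 : f (ψ i) = (f2 v2).image σ2 := by
          simp only [hfdef, dif_neg h, dif_pos h2, hbv]
        rw [h1, himg2, hip]
      · have hex : ∃ i' : Fin p, ψ i = ψ i' := ⟨i, rfl⟩
        have : hex.choose = i := (hψ hex.choose_spec).symm
        simp only [hfdef, dif_neg h, dif_neg h2, dif_pos hex, this]
  -- membership helpers
  have hmem_img1 : ∀ (u : V1) (c : Fin 5), σ1.symm c ∈ f1 u → c ∈ (f1 u).image σ1 := by
    intro u c hc
    exact Finset.mem_image.mpr ⟨σ1.symm c, hc, Equiv.apply_symm_apply σ1 c⟩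
  have hmem_img2 : ∀ (u : V2) (c : Fin 5), σ2.symm c ∈ f2 u → c ∈ (f2 u).image σ2 := by
    intro u c hc
    exact Finset.mem_image.mpr ⟨σ2.symm c, hc, Equiv.apply_symm_apply σ2 c⟩
  -- the hub : vertex φ1 v1
  have hhub : ∀ c : Fin 5, ∃ u, (u = φ1 v1 ∨ G.Adj u (φ1 v1)) ∧ c ∈ f u := by
    intro c
    by_cases hcS : σ1.symm c ∈ f1 v1
    · exact ⟨φ1 v1, Or.inl rfl, by rw [hfφ1]; exact hmem_img1 v1 c hcS⟩
    by_cases hcA : σ1.symm c ∈ A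
    · obtain ⟨u, hu, hcu⟩ := (hmemA _).mp hcA
      refine ⟨φ1 u, Or.inr ?_, ?_⟩
      · exact (hadj _ _).mpr (Or.inl ⟨u, v1, hu.symm, rfl, rfl⟩)
      · rw [hfφ1]; exact hmem_img1 u c hcu
    · have hcx : σ1.symm c = x₁ := hx₁ _ hcA hcS
      have hc2 : c = 2 := by
        have : σ1 (σ1.symm c) = σ1 x₁ := by rw [hcx]
        rwa [Equiv.apply_symm_apply, hσ1x₁] at this
      by_cases hp1 : p = 1
      · -- use a neighbor of v2 carrying b₀
        subst hp1
        obtain ⟨u, hu, hcu⟩ := (hmemB _).mp hb₀B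
        refine ⟨φ2 u, Or.inr ?_, ?_⟩
        · have hvv : φ2 v2 = φ1 v1 := by rw [← hend1, ← hend2]
          rw [← hvv]
          exact (hadj _ _).mpr (Or.inr (Or.inl ⟨u, v2, hu.symm, rfl, rfl⟩))
        · rw [hfφ2]
          have hb : σ2.symm c = b₀ := by
            have : σ2.symm c = σ2.symm (σ2 b₀) := by
              rw [hσ2b₀, hc2, hEdef]
              norm_num
            rwa [Equiv.symm_apply_apply] at this
          exact hmem_img2 u c (hb ▸ hcu)
      · have h1p : 1 < p := by omega
        refine ⟨ψ ⟨1, h1p⟩, Or.inr ?_, ?_⟩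
        · refine (hadj _ _).mpr (Or.inr (Or.inr ⟨0, h1p, Or.inr ⟨hend1.symm, rfl⟩⟩))
        · rw [hfψ ⟨1, h1p⟩, hc2, hpatdef]
          norm_num
  -- vertex φ2 v2 when p ≥ 2
  have hv2 : 2 ≤ p → ∀ c : Fin 5, ∃ u, (u = φ2 v2 ∨ G.Adj u (φ2 v2)) ∧ c ∈ f u := by
    intro hp2 c
    by_cases hcT : σ2.symm c ∈ f2 v2
    · exact ⟨φ2 v2, Or.inl rfl, by rw [hfφ2]; exact hmem_img2 v2 c hcT⟩
    by_cases hcB : σ2.symm c ∈ B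
    · obtain ⟨u, hu, hcu⟩ := (hmemB _).mp hcB
      refine ⟨φ2 u, Or.inr ?_, ?_⟩
      · exact (hadj _ _).mpr (Or.inr (Or.inl ⟨u, v2, hu.symm, rfl, rfl⟩))
      · rw [hfφ2]; exact hmem_img2 u c hcu
    · have hyzc := hmem_yz _ hcB hcT
      have hcyz : c = E + 3 ∨ c = E + 4 := by
        rcases hyzc with h | h
        · left
          have : σ2 (σ2.symm c) = σ2 y := by rw [h]
          rwa [Equiv.apply_symm_apply, hσ2y] at this
        · right
          have : σ2 (σ2.symm c) = σ2 z := by rw [h]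
          rwa [Equiv.apply_symm_apply, hσ2z] at this
      have hlt : p - 2 + 1 < p := by omega
      refine ⟨ψ ⟨p-2, Nat.lt_of_succ_lt hlt⟩, Or.inr ?_, ?_⟩
      · have he : (⟨p-2+1, hlt⟩ : Fin p) = ⟨p-1, by omega⟩ := Fin.ext (by simp; omega)
        refine (hadj _ _).mpr (Or.inr (Or.inr ⟨p-2, hlt, Or.inl ⟨rfl, ?_⟩⟩))
        rw [he, hend2]
      · rw [hfψ ⟨p-2, Nat.lt_of_succ_lt hlt⟩]
        -- E = pat-base(p-1) = pat-base(p-2) + 2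
        have hE : E = ((2 * (p-2) : ℕ) : Fin 5) + 2 := by
          rw [hEdef]
          have : p - 1 = (p-2) + 1 := by omega
          rw [this, fin5_cast_two_mul_succ]
        have h23 := fin5_add23 ((2 * (p-2) : ℕ) : Fin 5)
        rcases hcyz with h | h
        · rw [hpatdef]
          simp only [Finset.mem_insert, Finset.mem_singleton]
          left
          rw [h, hE, h23.1]
        · rw [hpatdef]
          simp only [Finset.mem_insert, Finset.mem_singleton]
          right
          rw [h, hE, h23.2]
  refine ⟨f, ?_, ?_⟩
  · -- cards
    intro w
    rcases hcover w with ⟨a, rfl⟩ | ⟨b, rfl⟩ | ⟨i, rfl⟩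
    · rw [hfφ1, Finset.card_image_of_injective _ σ1.injective, hf1card]
    · rw [hfφ2, Finset.card_image_of_injective _ σ2.injective, hf2card]
    · rw [hfψ, hpatdef]
      exact Finset.card_pair (fin5_ne_succ _)
  · -- satisfaction
    intro w c
    rcases hcover w with ⟨a, rfl⟩ | ⟨b, rfl⟩ | ⟨i, rfl⟩
    · by_cases ha : a = v1
      · subst ha; exact hhub c
      · obtain ⟨u, hor, hcu⟩ := hf1sat a ha (σ1.symm c)
        refine ⟨φ1 u, ?_, by rw [hfφ1]; exact hmem_img1 u c hcu⟩
        rcases hor with h | h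
        · exact Or.inl (by rw [h])
        · exact Or.inr ((hadj _ _).mpr (Or.inl ⟨u, a, h, rfl, rfl⟩))
    · by_cases hb : b = v2
      · rw [hb]
        by_cases hp1 : p = 1
        · have hvv : φ2 v2 = φ1 v1 := by
            subst hp1; rw [← hend1, ← hend2]
          rw [hvv]; exact hhub c
        · exact hv2 (by omega) c
      · obtain ⟨u, hor, hcu⟩ := hf2sat b hb (σ2.symm c)
        refine ⟨φ2 u, ?_, by rw [hfφ2]; exact hmem_img2 u c hcu⟩
        rcases hor with h | h
        · exact Or.inl (by rw [h])
        · exact Or.inr ((hadj _ _).mpr (Or.inr (Or.inl ⟨u, b, h, rfl, rfl⟩)))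
    · by_cases hi0 : (i : ℕ) = 0
      · have : ψ i = φ1 v1 := by
          rw [← hend1]; congr 1; exact Fin.ext (by simpa using hi0)
        rw [this]; exact hhub c
      · by_cases hip : (i : ℕ) = p - 1
        · have : ψ i = φ2 v2 := by
            rw [← hend2]; congr 1; exact Fin.ext (by simpa using hip)
          rw [this]
          exact hv2 (by omega) c
        · -- interior vertex
          have hilt : (i : ℕ) < p - 1 := by have := i.2; omega
          have higt : 0 < (i : ℕ) := by omega
          set j : ℕ := (i : ℕ) - 1 with hjdef
          have hj1 : j + 1 = (i : ℕ) := by omega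
          have hj1lt : j + 1 < p := by omega
          have hj2lt : j + 1 + 1 < p := by omega
          have hij : i = (⟨j+1, hj1lt⟩ : Fin p) := Fin.ext (by simp [hj1])
          set x : Fin 5 := ((2 * j : ℕ) : Fin 5) with hxdef
          have hx1 : ((2 * (j+1) : ℕ) : Fin 5) = x + 2 := fin5_cast_two_mul_succ j
          have hx2 : ((2 * (j+1+1) : ℕ) : Fin 5) = x + 4 := by
            rw [fin5_cast_two_mul_succ (j+1), hx1]
            ring
          have hadj_left : G.Adj (ψ ⟨j, Nat.lt_of_succ_lt hj1lt⟩) (ψ i) := by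
            rw [hij]
            exact (hadj _ _).mpr (Or.inr (Or.inr ⟨j, hj1lt, Or.inl ⟨rfl, rfl⟩⟩))
          have hadj_right : G.Adj (ψ ⟨j+1+1, hj2lt⟩) (ψ i) := by
            rw [hij]
            exact (hadj _ _).mpr (Or.inr (Or.inr ⟨j+1, hj2lt, Or.inr ⟨rfl, rfl⟩⟩))
          rcases fin5_triple_cover x c with h | h | h | h | h | h
          · refine ⟨ψ ⟨j, Nat.lt_of_succ_lt hj1lt⟩, Or.inr hadj_left, ?_⟩
            rw [hfψ, hpatdef]
            simp only [Finset.mem_insert, Finset.mem_singleton]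
            left; rw [h, hxdef]
          · refine ⟨ψ ⟨j, Nat.lt_of_succ_lt hj1lt⟩, Or.inr hadj_left, ?_⟩
            rw [hfψ, hpatdef]
            simp only [Finset.mem_insert, Finset.mem_singleton]
            right; rw [h, hxdef]
          · refine ⟨ψ i, Or.inl rfl, ?_⟩
            rw [hfψ, hpatdef, ← hj1]
            simp only [Finset.mem_insert, Finset.mem_singleton]
            left; rw [h, hx1]
          · refine ⟨ψ i, Or.inl rfl, ?_⟩
            rw [hfψ, hpatdef, ← hj1]
            simp only [Finset.mem_insert, Finset.mem_singleton]
            right; rw [h, hx1]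
          · refine ⟨ψ ⟨j+1+1, hj2lt⟩, Or.inr hadj_right, ?_⟩
            rw [hfψ, hpatdef]
            simp only [Finset.mem_insert, Finset.mem_singleton]
            left; rw [h, hx2]
          · refine ⟨ψ ⟨j+1+1, hj2lt⟩, Or.inr hadj_right, ?_⟩
            rw [hfψ, hpatdef]
            simp only [Finset.mem_insert, Finset.mem_singleton]
            right; rw [h, hx2]
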